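/- Let (x^{u_1},σ_1),…,(x^{u_m},σ_m) be a Stanley filtration of S/I for a monomial ideal I ⊊ S. Then for every 1 ≤ j ≤ m, the colon ideal ((I + ⟨x^{u_{j+1}},…,x^{u_m}⟩) : x^{u_j}) equals the prime ideal ⟨x_i : i ∉ σ_j⟩. In particular (I : x^{u_m}) = ⟨x_i : i ∉ σ_m⟩. -/

import Mathlib

open MvPolynomial

open MvPolynomial

/-- `I` is a monomial ideal: it is generated by a set of monomials `x^u`. -/
def IsMonomialIdeal {k : Type} [Field k] {n : ℕ} (I : Ideal (MvPolynomial (Fin n) k)) : Prop :=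
  ∃ G : Set (Fin n →₀ ℕ), I = Ideal.span ((fun u => (monomial u (1 : k))) '' G)

/-- The set of exponent vectors of monomials in the pair `(x^u, σ)`. -/
def stanleyPairSet {n : ℕ} (u : Fin n →₀ ℕ) (σ : Finset (Fin n)) : Set (Fin n →₀ ℕ) :=
  {w | ∃ v : Fin n →₀ ℕ, (∀ i, v i ≠ 0 → i ∈ σ) ∧ w = u + v}

/-- A Stanley decomposition of `S/I`. -/
def IsStanleyDecomp {k : Type} [Field k] {n : ℕ} (I : Ideal (MvPolynomial (Fin n) k))
    (𝔖 : Finset ((Fin n →₀ ℕ) × Finset (Fin n))) : Prop :=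
  (∀ p ∈ 𝔖, ∀ q ∈ 𝔖, p ≠ q → Disjoint (stanleyPairSet p.1 p.2) (stanleyPairSet q.1 q.2)) ∧
  (⋃ p ∈ (𝔖 : Set ((Fin n →₀ ℕ) × Finset (Fin n))), stanleyPairSet p.1 p.2)
      = {w | monomial w (1 : k) ∉ I}

/-- A Stanley filtration of `S/I`: an ordered Stanley decomposition
`(x^{u_1},σ_1),…,(x^{u_m},σ_m)` such that for every `1 ≤ j ≤ m` the first `j` pairs form a
Stanley decomposition of `S/(I + ⟨x^{u_{j+1}},…,x^{u_m}⟩)`. -/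
def IsStanleyFiltration {k : Type} [Field k] {n : ℕ} (I : Ideal (MvPolynomial (Fin n) k))
    (L : List ((Fin n →₀ ℕ) × Finset (Fin n))) : Prop :=
  IsStanleyDecomp I L.toFinset ∧
  ∀ j : ℕ, 1 ≤ j → j ≤ L.length →
    IsStanleyDecomp
      (I ⊔ Ideal.span ((fun p : (Fin n →₀ ℕ) × Finset (Fin n) => monomial p.1 (1 : k)) ''
        {p | p ∈ L.drop j}))
      (L.take j).toFinset


private lemma mem_drop_ofFn {α : Type*} {m : ℕ} (f : Fin m → α) (t : ℕ) (p : α) :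
    p ∈ (List.ofFn f).drop t ↔ ∃ i : Fin m, t ≤ (i : ℕ) ∧ f i = p := by
  rw [List.mem_iff_getElem]
  constructor
  · rintro ⟨i, hi, rfl⟩
    rw [List.length_drop, List.length_ofFn] at hi
    refine ⟨⟨t + i, by omega⟩, by simp, ?_⟩
    rw [List.getElem_drop, List.getElem_ofFn]
  · rintro ⟨i, hk, rfl⟩
    refine ⟨(i : ℕ) - t, by rw [List.length_drop, List.length_ofFn]; omega, ?_⟩
    rw [List.getElem_drop, List.getElem_ofFn]
    congr 1
    ext
    simp
    omega

private lemma mem_take_ofFn {α : Type*} {m : ℕ} (f : Fin m → α) (t : ℕ) (p : α) :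
    p ∈ (List.ofFn f).take t ↔ ∃ i : Fin m, (i : ℕ) < t ∧ f i = p := by
  rw [List.mem_iff_getElem]
  constructor
  · rintro ⟨i, hi, rfl⟩
    rw [List.length_take, List.length_ofFn] at hi
    have h2 : i < m := lt_of_lt_of_le hi inf_le_right
    refine ⟨⟨i, h2⟩, lt_of_lt_of_le hi inf_le_left, ?_⟩
    rw [List.getElem_take, List.getElem_ofFn]
  · rintro ⟨i, hk, rfl⟩
    exact ⟨i, by rw [List.length_take, List.length_ofFn]; omega,
      by rw [List.getElem_take, List.getElem_ofFn]⟩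


/-- if `(x^{u_1},σ_1),…,(x^{u_m},σ_m)` is a Stanley filtration of `S/I`, then
for every `j` the colon ideal `((I + ⟨x^{u_{j+1}},…,x^{u_m}⟩) : x^{u_j})` equals the prime
ideal `⟨x_i : i ∉ σ_j⟩` (0-based indexing: the pair at index `j` is divided out of the ideal
generated by `I` together with the monomials at indices `> j`).  In particular, taking `j`
to be the last index, `(I : x^{u_m}) = ⟨x_i : i ∉ σ_m⟩`. -/
theorem stanley_filtration_colon_prime {k : Type} [Field k] {n : ℕ}
    (I : Ideal (MvPolynomial (Fin n) k)) (hmon : IsMonomialIdeal I) (hproper : I ≠ ⊤)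
    {m : ℕ} (f : Fin m → (Fin n →₀ ℕ) × Finset (Fin n))
    (hf : IsStanleyFiltration I (List.ofFn f)) :
    ∀ j : Fin m,
      Submodule.colon
        (I ⊔ Ideal.span ((fun i : Fin m => monomial (f i).1 (1 : k)) '' {i | (j : ℕ) < (i : ℕ)}))
        (Ideal.span {monomial (f j).1 (1 : k)})
      = Ideal.span ((fun i => (X i : MvPolynomial (Fin n) k)) '' {i | i ∉ (f j).2}) := by
  intro j
  classical
  obtain ⟨G, hG⟩ := hmon
  have hlen : (List.ofFn f).length = m := List.length_ofFn
  set u : Fin n →₀ ℕ := (f j).1 with hu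
  set J : Ideal (MvPolynomial (Fin n) k) :=
    I ⊔ Ideal.span ((fun i : Fin m => monomial (f i).1 (1 : k)) '' {i | (j : ℕ) < (i : ℕ)})
    with hJ
  set E : Set (Fin n →₀ ℕ) :=
    G ∪ ((fun i : Fin m => (f i).1) '' {i : Fin m | (j : ℕ) < (i : ℕ)}) with hE
  have hdropset : ∀ t : ℕ,
      ((fun p : (Fin n →₀ ℕ) × Finset (Fin n) => monomial p.1 (1 : k)) ''
          {p | p ∈ (List.ofFn f).drop t})
        = (fun i : Fin m => monomial (f i).1 (1 : k)) '' {i : Fin m | t ≤ (i : ℕ)} := by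
    intro t
    ext q
    simp only [Set.mem_image, Set.mem_setOf_eq, mem_drop_ofFn]
    constructor
    · rintro ⟨p, ⟨i, hi, rfl⟩, rfl⟩; exact ⟨i, hi, rfl⟩
    · rintro ⟨i, hi, rfl⟩; exact ⟨f i, ⟨i, hi, rfl⟩, rfl⟩
  have hsetj1 : {i : Fin m | ((j : ℕ) + 1) ≤ (i : ℕ)} = {i : Fin m | (j : ℕ) < (i : ℕ)} := by
    ext i; simp only [Set.mem_setOf_eq]; omega
  have hJspan : J = Ideal.span ((fun w => monomial w (1 : k)) '' E) := by
    rw [hJ, hE, Set.image_union, Ideal.span_union, hG]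
    congr 1
    rw [Set.image_image]
  have hmemJ : ∀ q : MvPolynomial (Fin n) k,
      q ∈ J ↔ ∀ w ∈ q.support, ∃ g ∈ E, g ≤ w := by
    intro q; rw [hJspan]; exact mem_ideal_span_monomial_image
  have hmonJ : ∀ w : Fin n →₀ ℕ, (∃ g ∈ E, g ≤ w) → monomial w (1 : k) ∈ J := by
    rintro w ⟨g, hg, hle⟩
    have hw : monomial w (1 : k) = monomial (w - g) 1 * monomial g 1 := by
      rw [monomial_mul, one_mul, tsub_add_cancel_of_le hle]
    rw [hw, hJspan]
    exact Ideal.mul_mem_left _ _ (Ideal.subset_span ⟨g, hg, rfl⟩)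
  have hdec := (hf.2 ((j : ℕ) + 1) (by omega) (by rw [hlen]; omega)).2
  rw [hdropset, hsetj1, ← hJ] at hdec
  have hUmem : ∀ w : Fin n →₀ ℕ,
      (∃ l : Fin m, (l : ℕ) < (j : ℕ) + 1 ∧ w ∈ stanleyPairSet (f l).1 (f l).2)
        ↔ monomial w (1 : k) ∉ J := by
    intro w
    have h := Set.ext_iff.mp hdec w
    simp only [Set.mem_iUnion, Finset.mem_coe, List.mem_toFinset, mem_take_ofFn,
      Set.mem_setOf_eq] at h
    rw [← h]
    constructor
    · rintro ⟨l, hl, hw⟩; exact ⟨f l, ⟨l, hl, rfl⟩, hw⟩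
    · rintro ⟨p, ⟨l, hl, rfl⟩, hw⟩; exact ⟨l, hl, hw⟩
  have factA : ∀ i : Fin n, i ∉ (f j).2 → monomial (u + Finsupp.single i 1) (1 : k) ∈ J := by
    intro i hi
    by_contra hmem
    obtain ⟨l, hl, v, hv, heq⟩ := (hUmem _).mpr hmem
    rcases Nat.lt_or_ge (l : ℕ) (j : ℕ) with hlt | hge
    · have hdec2 := (hf.2 (j : ℕ) (by omega) (by rw [hlen]; omega)).2
      have hfj : f j ∈ (List.ofFn f).drop (j : ℕ) :=
        (mem_drop_ofFn f _ _).mpr ⟨j, le_refl _, rfl⟩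
      have humem : monomial u (1 : k) ∈
          (I ⊔ Ideal.span ((fun p : (Fin n →₀ ℕ) × Finset (Fin n) => monomial p.1 (1 : k)) ''
            {p | p ∈ (List.ofFn f).drop (j : ℕ)})) :=
        Submodule.mem_sup_right (Ideal.subset_span ⟨f j, hfj, rfl⟩)
      have h2 : monomial (u + Finsupp.single i 1) (1 : k) ∈
          (I ⊔ Ideal.span ((fun p : (Fin n →₀ ℕ) × Finset (Fin n) => monomial p.1 (1 : k)) ''
            {p | p ∈ (List.ofFn f).drop (j : ℕ)})) := by
        have hh : monomial (u + Finsupp.single i 1) (1 : k)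
            = monomial (Finsupp.single i 1) 1 * monomial u 1 := by
          rw [monomial_mul, one_mul, add_comm]
        rw [hh]
        exact Ideal.mul_mem_left _ _ humem
      have h3 : u + Finsupp.single i 1 ∈
          ⋃ p ∈ ((((List.ofFn f).take (j : ℕ)).toFinset :
            Finset ((Fin n →₀ ℕ) × Finset (Fin n))) :
            Set ((Fin n →₀ ℕ) × Finset (Fin n))), stanleyPairSet p.1 p.2 := by
        simp only [Set.mem_iUnion, Finset.mem_coe, List.mem_toFinset, mem_take_ofFn]
        exact ⟨f l, ⟨l, hlt, rfl⟩, v, hv, heq⟩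
      rw [hdec2] at h3
      exact h3 h2
    · have hlj : l = j := Fin.ext (by omega)
      rw [hlj] at heq hv
      have hv' : v = Finsupp.single i 1 := (add_left_cancel heq.symm)
      apply hi
      apply hv i
      rw [hv']
      simp
  apply le_antisymm
  · intro q hq
    rw [Ideal.mem_colon_span_singleton] at hq
    apply mem_ideal_span_X_image.mpr
    intro w hw
    by_contra hcon
    push_neg at hcon
    have hsupp : ∀ i : Fin n, w i ≠ 0 → i ∈ (f j).2 := by
      intro i hwi
      by_contra h
      exact hwi (hcon i h)
    have hnot : monomial (u + w) (1 : k) ∉ J :=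
      (hUmem _).mp ⟨j, by omega, ⟨w, hsupp, rfl⟩⟩
    have hws : w + u ∈ (q * monomial u (1 : k)).support := by
      rw [mem_support_iff, coeff_mul_monomial]
      simpa using mem_support_iff.mp hw
    obtain ⟨g, hg, hle⟩ := (hmemJ _).mp hq (w + u) hws
    exact hnot (hmonJ _ ⟨g, hg, by rwa [add_comm u w]⟩)
  · rw [Ideal.span_le]
    rintro _ ⟨i, hi, rfl⟩
    rw [SetLike.mem_coe, Ideal.mem_colon_span_singleton]
    have hX : (X i : MvPolynomial (Fin n) k) * monomial u 1
        = monomial (u + Finsupp.single i 1) 1 := by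
      have : (X i : MvPolynomial (Fin n) k) = monomial (Finsupp.single i 1) 1 := rfl
      rw [this, monomial_mul, one_mul, add_comm]
    rw [hX]
    exact factA i hi
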